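/- arXiv:1803.08397 — 5 statements merged into one kernel-verified Lean document; each statement's English description precedes it below -/
import Mathlib

section
/- Let p > 1, N ≥ 1, R > 0, μ ∈ ℝ with μ + μ* > 0 where μ* = 2(p+1)/(p-1)². If 0 < c₋ ≤ (μ + μ*)^{1/(p-1)}, then w₋(r) = c₋(R-r)^{-2/(p-1)} satisfies w₋'' + ((N-1)/r) w₋' + μ (R-r)^{-2} w₋ - w₋^p ≥ 0 on (0, R), i.e. w₋ is a subsolution of the radial equation. -/
/-- If `0 < c₋ ≤ (μ+μ*)^{1/(p-1)}` then `w₋(r) = c₋(R-r)^{-2/(p-1)}` is a subsolution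
of the radial equation on `(0, R)`. -/
theorem stmt5 (p μ μs R c : ℝ) (N : ℕ) (hp : 1 < p) (hN : 1 ≤ N)
    (hμs : μs = 2 * (p + 1) / (p - 1)^2) (hμ : 0 < μ + μs)
    (hR : 0 < R) (hc0 : 0 < c) (hc : c ≤ (μ + μs) ^ ((1:ℝ)/(p-1)))
    (w : ℝ → ℝ) (hw : w = fun r : ℝ => c * (R - r) ^ (-(2/(p-1)))) :
    ∀ r ∈ Set.Ioo (0:ℝ) R,
      0 ≤ deriv (deriv w) r + ((N:ℝ) - 1) / r * deriv w r
        + μ / (R - r)^2 * w r - (w r) ^ p := by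
  intro r hr
  obtain ⟨hr0, hrR⟩ := hr
  have hp1 : (0:ℝ) < p - 1 := by linarith
  set α : ℝ := -(2/(p-1)) with hα
  have hRr : 0 < R - r := by linarith
  -- derivative of w on Iio R
  have hD : ∀ x ∈ Set.Iio R, HasDerivAt w (c * (-1 * α * (R - x) ^ (α - 1))) x := by
    intro x hx
    have hx' : R - x ≠ 0 := by
      have : x < R := hx
      intro h; linarith [sub_eq_zero.mp h]
    have h1 : HasDerivAt (fun y : ℝ => R - y) (-1) x := by
      simpa using (hasDerivAt_id x).const_sub R
    have h2 := (h1.rpow_const (p := α) (Or.inl hx')).const_mul c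
    rw [hw]
    exact h2
  have hd1 : deriv w r = c * (-1 * α * (R - r) ^ (α - 1)) := (hD r hrR).deriv
  have hEv : deriv w =ᶠ[nhds r] fun x => c * (-1 * α * (R - x) ^ (α - 1)) := by
    filter_upwards [Iio_mem_nhds hrR] with x hx using (hD x hx).deriv
  have h1 : HasDerivAt (fun y : ℝ => R - y) (-1) r := by
    simpa using (hasDerivAt_id r).const_sub R
  have hD2 : HasDerivAt (fun x => c * (-1 * α * (R - x) ^ (α - 1)))
      (c * (-1 * α) * (-1 * (α - 1) * (R - r) ^ (α - 1 - 1))) r := by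
    have h3 := (h1.rpow_const (p := α - 1) (Or.inl (ne_of_gt hRr))).const_mul (c * (-1 * α))
    have : (fun x => c * (-1 * α) * (R - x) ^ (α - 1)) =
        (fun x => c * (-1 * α * (R - x) ^ (α - 1))) := by
      funext x; ring
    rwa [this] at h3
  have hd2 : deriv (deriv w) r = c * (-1 * α) * (-1 * (α - 1) * (R - r) ^ (α - 1 - 1)) := by
    rw [hEv.deriv_eq]
    exact hD2.deriv
  have hsub : α - 1 - 1 = α - 2 := by ring
  rw [hsub] at hd2
  set A : ℝ := (R - r) ^ (α - 2) with hAdef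
  have hA : 0 < A := Real.rpow_pos_of_pos hRr _
  have hB : (0:ℝ) ≤ (R - r) ^ (α - 1) := (Real.rpow_pos_of_pos hRr _).le
  have hμs' : α * (α - 1) = μs := by
    rw [hμs, hα]; field_simp; ring
  -- key bound
  have key : c ^ (p - 1) ≤ μ + μs := by
    calc c ^ (p - 1) ≤ ((μ + μs) ^ ((1:ℝ)/(p-1))) ^ (p - 1) :=
          Real.rpow_le_rpow hc0.le hc hp1.le
      _ = μ + μs := by
          rw [← Real.rpow_mul hμ.le, one_div, inv_mul_cancel₀ hp1.ne', Real.rpow_one]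
  -- rewrite w r ^ p
  have hsplit : (R - r) ^ α = A * (R - r) ^ 2 := by
    rw [hAdef, ← Real.rpow_natCast (R - r) 2, ← Real.rpow_add hRr]
    norm_num
  have hpow : (w r) ^ p = c ^ (p - 1) * c * A := by
    rw [hw]
    simp only
    rw [Real.mul_rpow hc0.le (Real.rpow_pos_of_pos hRr α).le,
      ← Real.rpow_mul hRr.le]
    have hαp : α * p = α - 2 := by
      rw [hα]; field_simp; ring
    rw [hαp, ← hAdef]
    congr 1
    rw [show p = (p - 1) + 1 by ring, Real.rpow_add hc0, Real.rpow_one]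
    ring_nf
  have hμterm : μ / (R - r)^2 * w r = μ * c * A := by
    rw [hw]
    simp only
    rw [hsplit]
    have h2 : (R - r)^2 ≠ 0 := pow_ne_zero 2 hRr.ne'
    field_simp
  rw [hd1, hd2, hpow, hμterm]
  have hT2 : 0 ≤ ((N:ℝ) - 1) / r * (c * (-1 * α * (R - r) ^ (α - 1))) := by
    apply mul_nonneg
    · apply div_nonneg _ hr0.le
      have : (1:ℝ) ≤ (N:ℝ) := by exact_mod_cast hN
      linarith
    · apply mul_nonneg hc0.le
      apply mul_nonneg _ hB
      have : -1 * α = 2 / (p - 1) := by rw [hα]; ring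
      rw [this]
      exact div_nonneg (by norm_num) hp1.le
  have hident : c * (-1 * α) * (-1 * (α - 1) * A) = c * μs * A := by
    rw [← hμs']; ring
  rw [hident]
  nlinarith [mul_nonneg (mul_nonneg hc0.le hA.le) (sub_nonneg.2 key), hT2]
end

section
/- Let N ≥ 1, δ₀ > 0, μ < 0, and let η solve the ODE η'' + ((N-1)/r) η' + μ η/(δ₀ - r)² = 0 on (δ₀/2, δ₀) with η(δ₀/2) = 1, η'(δ₀/2) = 0. Then η is positive and nondecreasing on (δ₀/2, δ₀): η has no interior local maximum, η ≥ 1 and η' ≥ 0 on its interval of existence within (δ₀/2, δ₀). -/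
/-- For `μ < 0`, the solution of `η'' + ((N-1)/r)η' + μη/(δ₀-r)² = 0` on `(δ₀/2, δ₀)`
with `η(δ₀/2) = 1`, `η'(δ₀/2) = 0` is positive and nondecreasing: `η ≥ 1`, `η' ≥ 0`,
and `η` has no interior local maximum. -/
theorem stmt9 (N : ℕ) (hN : 1 ≤ N) (δ₀ μ : ℝ) (hδ₀ : 0 < δ₀) (hμ : μ < 0)
    (η : ℝ → ℝ)
    (hreg : ContDiffOn ℝ 2 η (Set.Ico (δ₀/2) δ₀))
    (hode : ∀ r ∈ Set.Ico (δ₀/2) δ₀,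
      deriv (deriv η) r + ((N:ℝ) - 1) / r * deriv η r + μ / (δ₀ - r)^2 * η r = 0)
    (hinit : η (δ₀/2) = 1) (hinit' : deriv η (δ₀/2) = 0) :
    (∀ r ∈ Set.Ico (δ₀/2) δ₀, 1 ≤ η r ∧ 0 ≤ deriv η r) ∧
    (∀ r ∈ Set.Ioo (δ₀/2) δ₀, ¬ IsLocalMax η r) := by
  set a := δ₀ / 2 with ha_def
  have ha : 0 < a := by positivity
  have hab : a < δ₀ := by rw [ha_def]; linarith
  have haI : a ∈ Set.Ico a δ₀ := ⟨le_refl _, hab⟩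
  have hδa : δ₀ - a = δ₀ / 2 := by rw [ha_def]; ring
  -- the ODE at the left endpoint forces `deriv η` to be differentiable there,
  -- hence continuous at `a`
  have hD2a : deriv (deriv η) a = -(μ / (δ₀ - a) ^ 2) := by
    have h := hode a haI
    rw [hinit, hinit'] at h
    linarith [h]
  have hne : deriv (deriv η) a ≠ 0 := by
    rw [hD2a, hδa]
    have h1 : (0:ℝ) < (δ₀/2)^2 := by positivity
    have h2 : μ / (δ₀/2)^2 < 0 := div_neg_of_neg_of_pos hμ h1
    intro h
    rw [neg_eq_zero] at h
    linarith
  have hdiffa : DifferentiableAt ℝ (deriv η) a := by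
    by_contra h
    exact hne (deriv_zero_of_not_differentiableAt h)
  have hconta : ContinuousAt (deriv η) a := hdiffa.continuousAt
  -- regularity on the open interval
  have hIoo : ContDiffOn ℝ 2 η (Set.Ioo a δ₀) := hreg.mono Set.Ioo_subset_Ico_self
  have hd1 : DifferentiableOn ℝ η (Set.Ioo a δ₀) :=
    hIoo.differentiableOn (by norm_num)
  have hcd1 : ContDiffOn ℝ 1 (deriv η) (Set.Ioo a δ₀) :=
    hIoo.deriv_of_isOpen isOpen_Ioo (by norm_num)
  have hF2 : ∀ t ∈ Set.Ioo a δ₀,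
      DifferentiableAt ℝ η t ∧ DifferentiableAt ℝ (deriv η) t := by
    intro t ht
    exact ⟨(hd1 t ht).differentiableAt (isOpen_Ioo.mem_nhds ht),
      ((hcd1.differentiableOn one_ne_zero) t ht).differentiableAt (isOpen_Ioo.mem_nhds ht)⟩
  -- continuity of `deriv η` at every point of `Ico a δ₀`
  have hcderiv : ∀ t ∈ Set.Ico a δ₀, ContinuousAt (deriv η) t := by
    intro t ht
    rcases eq_or_lt_of_le ht.1 with h | h
    · rwa [← h]
    · exact (hF2 t ⟨h, ht.2⟩).2.continuousAt
  -- the auxiliary function w = r^(N-1) * η'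
  set w : ℝ → ℝ := fun t => t ^ (N - 1) * deriv η t with hw_def
  have hwa : w a = 0 := by simp [hw_def, hinit']
  obtain ⟨n, rfl⟩ : ∃ n, N = n + 1 := ⟨N - 1, (Nat.succ_pred_eq_of_pos hN).symm⟩
  have hwderiv : ∀ t ∈ Set.Ioo a δ₀,
      HasDerivAt w (-(μ * t ^ n * η t / (δ₀ - t) ^ 2)) t := by
    intro t ht
    obtain ⟨h1, h2⟩ := hF2 t ht
    have ht0 : 0 < t := lt_trans ha ht.1
    have htδ : t < δ₀ := ht.2
    have hp : HasDerivAt (fun x : ℝ => x ^ n) ((n : ℝ) * t ^ (n - 1)) t := by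
      simpa using hasDerivAt_pow n t
    have hd : HasDerivAt (deriv η) (deriv (deriv η) t) t := h2.hasDerivAt
    have hmul := hp.mul hd
    have hode' := hode t ⟨le_of_lt ht.1, ht.2⟩
    have hD2 : deriv (deriv η) t
        = -(((n:ℝ) + 1 - 1) / t * deriv η t) - μ / (δ₀ - t) ^ 2 * η t := by
      push_cast at hode' ⊢
      linarith [hode']
    have hval : (n : ℝ) * t ^ (n - 1) * deriv η t + t ^ n * deriv (deriv η) t
        = -(μ * t ^ n * η t / (δ₀ - t) ^ 2) := by
      rw [hD2]
      have hn1 : ((n:ℝ) + 1 - 1) = (n:ℝ) := by ring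
      rw [hn1]
      have ht0' : t ≠ 0 := ne_of_gt ht0
      have hδt : (δ₀ - t) ^ 2 ≠ 0 := by
        have : δ₀ - t > 0 := by linarith
        positivity
      cases n with
      | zero => simp; ring
      | succ k =>
        have hk : k + 1 - 1 = k := rfl
        rw [hk, pow_succ]
        push_cast
        field_simp
        ring
    have hfn : (fun t : ℝ => t ^ (n + 1 - 1) * deriv η t)
        = fun t : ℝ => t ^ n * deriv η t := by
      norm_num
    rw [hw_def, hfn]
    rw [← hval]; exact hmul
  -- Key lemma: if η ≥ 1/2 on [a,m] then η ≥ 1 and η' > 0 (on (a,m]) there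
  have key : ∀ m ∈ Set.Ico a δ₀, (∀ s ∈ Set.Icc a m, 1 / 2 ≤ η s) →
      (∀ s ∈ Set.Icc a m, 1 ≤ η s) ∧ (∀ s ∈ Set.Ioc a m, 0 < deriv η s) := by
    intro m hm hη2
    have ham : a ≤ m := hm.1
    have hsubIco : Set.Icc a m ⊆ Set.Ico a δ₀ := fun s hs =>
      ⟨hs.1, lt_of_le_of_lt hs.2 hm.2⟩
    have hwmono : StrictMonoOn w (Set.Icc a m) := by
      apply strictMonoOn_of_deriv_pos (convex_Icc a m)
      · intro t ht
        exact (((continuous_pow (n + 1 - 1)).continuousAt).mul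
          (hcderiv t (hsubIco ht))).continuousWithinAt
      · intro t ht
        rw [interior_Icc] at ht
        have htI : t ∈ Set.Ioo a δ₀ := ⟨ht.1, ht.2.trans hm.2⟩
        rw [(hwderiv t htI).deriv]
        have ht0 : 0 < t := lt_trans ha htI.1
        have h1 : 0 < -μ := by linarith
        have h2 : (0:ℝ) < t ^ n := pow_pos ht0 n
        have h3 : (1:ℝ)/2 ≤ η t := hη2 t ⟨le_of_lt ht.1, le_of_lt ht.2⟩
        have h4 : (0:ℝ) < (δ₀ - t) ^ 2 := by
          have h5 : δ₀ - t > 0 := by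
            have := htI.2; linarith
          positivity
        have h5 : 0 < η t := by linarith
        have h6 : 0 < (-μ) * t ^ n * η t / (δ₀ - t) ^ 2 :=
          div_pos (mul_pos (mul_pos h1 h2) h5) h4
        have heq : -(μ * t ^ n * η t / (δ₀ - t) ^ 2)
            = (-μ) * t ^ n * η t / (δ₀ - t) ^ 2 := by ring
        rw [heq]; exact h6
    have hderivpos : ∀ t ∈ Set.Ioc a m, 0 < deriv η t := by
      intro t ht
      have hwp : 0 < w t := by
        have h := hwmono ⟨le_rfl, ham⟩ ⟨le_of_lt ht.1, ht.2⟩ ht.1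
        rwa [hwa] at h
      have ht0 : 0 < t := lt_trans ha ht.1
      by_contra hle
      push_neg at hle
      have hwt : w t = t ^ (n + 1 - 1) * deriv η t := rfl
      have hk : (0:ℝ) < t ^ (n + 1 - 1) := pow_pos ht0 _
      nlinarith
    refine ⟨?_, hderivpos⟩
    have hmono : StrictMonoOn η (Set.Icc a m) := by
      apply strictMonoOn_of_deriv_pos (convex_Icc a m)
      · exact hreg.continuousOn.mono hsubIco
      · intro t ht
        rw [interior_Icc] at ht
        exact hderivpos t ⟨ht.1, le_of_lt ht.2⟩
    intro s hs
    rcases eq_or_lt_of_le hs.1 with h | h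
    · rw [← h, hinit]
    · have h2 := hmono ⟨le_rfl, ham⟩ hs h
      rw [hinit] at h2
      linarith
  -- Main claim via a supremum/continuity argument, first with threshold 1/2
  have main : ∀ r ∈ Set.Ico a δ₀,
      (∀ s ∈ Set.Icc a r, 1 ≤ η s) ∧ (∀ s ∈ Set.Ioc a r, 0 < deriv η s) := by
    intro r hr
    have hsub : ∀ s ∈ Set.Icc a r, 1 / 2 ≤ η s := by
      set S := {t ∈ Set.Icc a r | ∀ s ∈ Set.Icc a t, 1 / 2 ≤ η s} with hS
      have haS : a ∈ S := by
        refine ⟨⟨le_rfl, hr.1⟩, ?_⟩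
        intro s hs
        have hsa : s = a := le_antisymm hs.2 hs.1
        rw [hsa, hinit]; norm_num
      have hne' : S.Nonempty := ⟨a, haS⟩
      have hbdd : BddAbove S := ⟨r, fun t ht => ht.1.2⟩
      set M := sSup S with hM
      have hMa : a ≤ M := le_csSup hbdd haS
      have hMr : M ≤ r := csSup_le hne' fun t ht => ht.1.2
      have hMIco : M ∈ Set.Ico a δ₀ := ⟨hMa, lt_of_le_of_lt hMr hr.2⟩
      have hlt : ∀ s, a ≤ s → s < M → 1 / 2 ≤ η s := by
        intro s hsa hsM
        obtain ⟨t, htS, hst⟩ := exists_lt_of_lt_csSup hne' hsM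
        exact htS.2 s ⟨hsa, le_of_lt hst⟩
      have hMS : ∀ s ∈ Set.Icc a M, 1 / 2 ≤ η s := by
        intro s hs
        rcases lt_or_eq_of_le hs.2 with h | h
        · exact hlt s hs.1 h
        · rw [h]
          rcases eq_or_lt_of_le hMa with h' | h'
          · rw [← h', hinit]; norm_num
          · -- s = M > a : take limit from the left
            have hcont : ContinuousAt η M :=
              (hF2 M ⟨h', hMIco.2⟩).1.continuousAt
            have htend : Filter.Tendsto η (nhdsWithin M (Set.Iio M)) (nhds (η M)) :=
              hcont.continuousWithinAt
            refine ge_of_tendsto htend ?_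
            filter_upwards [Ioo_mem_nhdsLT_of_mem (⟨h', le_rfl⟩ : M ∈ Set.Ioc a M)] with x hx
            exact hlt x (le_of_lt hx.1) hx.2
      have hMeq : M = r := by
        by_contra hMne
        have hMr' : M < r := lt_of_le_of_ne hMr hMne
        have hηM : 1 ≤ η M := (key M hMIco hMS).1 M ⟨hMa, le_rfl⟩
        have hcontM : ContinuousWithinAt η (Set.Ico a δ₀) M :=
          hreg.continuousOn M hMIco
        have hev : η ⁻¹' Set.Ioi (1/2 : ℝ) ∈ nhdsWithin M (Set.Ico a δ₀) :=
          hcontM (Ioi_mem_nhds (by linarith))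
        rw [Metric.mem_nhdsWithin_iff] at hev
        obtain ⟨ε, hε, hball⟩ := hev
        set t := min (M + ε / 2) ((M + r) / 2) with ht_def
        have htM : M < t := by
          apply lt_min <;> [linarith; linarith]
        have htr : t < r := by
          have h1 : t ≤ (M + r) / 2 := min_le_right _ _
          linarith
        have htS : t ∈ S := by
          refine ⟨⟨hMa.trans (le_of_lt htM), le_of_lt htr⟩, ?_⟩
          intro s hs
          rcases le_or_gt s M with h | h
          · exact hMS s ⟨hs.1, h⟩
          · have hs1 : s ∈ Metric.ball M ε := by
              rw [Metric.mem_ball, Real.dist_eq, abs_of_pos (by linarith)]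
              have h2 : s ≤ t := hs.2
              have h3 : t ≤ M + ε / 2 := min_le_left _ _
              linarith
            have hs2 : s ∈ Set.Ico a δ₀ := ⟨hs.1, by
              have h2 : s ≤ t := hs.2
              have := hr.2
              linarith⟩
            have := hball ⟨hs1, hs2⟩
            exact le_of_lt this
        have := le_csSup hbdd htS
        rw [← hM] at this
        linarith
      intro s hs
      exact hMS s ⟨hs.1, hs.2.trans_eq hMeq.symm⟩
    exact key r hr hsub
  constructor
  · intro r hr
    obtain ⟨h1, h2⟩ := main r hr
    refine ⟨h1 r ⟨hr.1, le_rfl⟩, ?_⟩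
    rcases eq_or_lt_of_le hr.1 with h | h
    · rw [← h, hinit']
    · exact le_of_lt (h2 r ⟨h, le_rfl⟩)
  · intro r hr hmax
    have h2 := (main r ⟨le_of_lt hr.1, hr.2⟩).2 r ⟨hr.1, le_rfl⟩
    rw [hmax.deriv_eq_zero] at h2
    exact lt_irrefl 0 h2
end

section
/- Let μ < 0, β = β₋ = 1/2 - √(1/4 - μ) < 0, N ≥ 1, δ₀ > 0. Suppose v : (0, δ₀/2) → ℝ is positive and satisfies (σ v')' = β σ (N-1) v /((δ₀ - δ) δ) on (0, δ₀/2), where σ(δ) = δ^{2β}(δ₀ - δ)^{N-1}. Then (σ v')' ≤ 0, i.e. σ v' is nonincreasing, and consequently for 0 < ε < δ < δ₀/2: v(ε) ≤ v(δ) - σ(δ) v'(δ) ∫_ε^δ σ(s)^{-1} ds; in particular v is bounded as ε → 0⁺. -/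
/-- For `μ < 0`, `β = β₋ < 0`, a positive solution `v` of
`(σv')' = βσ(N-1)v/((δ₀-δ)δ)` with `σ(δ) = δ^{2β}(δ₀-δ)^{N-1}` has `σv'` nonincreasing,
satisfies `v(ε) ≤ v(δ) - σ(δ)v'(δ)∫_ε^δ σ⁻¹`, and is bounded as `ε → 0⁺`. -/
theorem stmt10 (N : ℕ) (hN : 1 ≤ N) (δ₀ μ β : ℝ) (hδ₀ : 0 < δ₀) (hμ : μ < 0)
    (hβ : β = 1/2 - Real.sqrt (1/4 - μ)) (hβneg : β < 0)
    (σ v : ℝ → ℝ)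
    (hσ : σ = fun δ : ℝ => δ ^ (2*β) * (δ₀ - δ) ^ ((N:ℝ) - 1))
    (hvpos : ∀ δ ∈ Set.Ioo (0:ℝ) (δ₀/2), 0 < v δ)
    (hreg : ContDiffOn ℝ 2 v (Set.Ioo (0:ℝ) (δ₀/2)))
    (hode : ∀ δ ∈ Set.Ioo (0:ℝ) (δ₀/2),
      deriv (fun t => σ t * deriv v t) δ = β * σ δ * ((N:ℝ) - 1) * v δ / ((δ₀ - δ) * δ)) :
    (∀ δ ∈ Set.Ioo (0:ℝ) (δ₀/2), deriv (fun t => σ t * deriv v t) δ ≤ 0) ∧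
    (∀ ε δ : ℝ, 0 < ε → ε < δ → δ < δ₀/2 →
      v ε ≤ v δ - σ δ * deriv v δ * ∫ s in ε..δ, (σ s)⁻¹) ∧
    (∃ M : ℝ, ∀ ε ∈ Set.Ioo (0:ℝ) (δ₀/4), v ε ≤ M) := by
  have hNR : (1:ℝ) ≤ (N:ℝ) := by exact_mod_cast hN
  have hIopen : IsOpen (Set.Ioo (0:ℝ) (δ₀/2)) := isOpen_Ioo
  -- positivity of σ
  have hσpos : ∀ s : ℝ, 0 < s → s < δ₀ → 0 < σ s := by
    intro s hs hs'
    rw [hσ]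
    have h1 : (0:ℝ) < δ₀ - s := by linarith
    exact mul_pos (Real.rpow_pos_of_pos hs _) (Real.rpow_pos_of_pos h1 _)
  -- differentiability of σ on I
  have hσdiff : ∀ s ∈ Set.Ioo (0:ℝ) (δ₀/2), DifferentiableAt ℝ σ s := by
    intro s hs
    rw [hσ]
    have h1 : (0:ℝ) < δ₀ - s := by have := hs.2; have := hs.1; linarith
    exact (Real.differentiableAt_rpow_const_of_ne _ hs.1.ne').mul
      (((differentiableAt_const δ₀).sub differentiableAt_id).rpow_const (Or.inl h1.ne'))
  -- deriv v is C¹ on I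
  have h2v : ContDiffOn ℝ ((1:ℕ) + 1) v (Set.Ioo (0:ℝ) (δ₀/2)) := by
    convert hreg using 2
    norm_num
  have h1v : ContDiffOn ℝ 1 (deriv v) (Set.Ioo (0:ℝ) (δ₀/2)) :=
    ((contDiffOn_succ_iff_deriv_of_isOpen hIopen).1 h2v).2.2
  have hv'diff : ∀ s ∈ Set.Ioo (0:ℝ) (δ₀/2), DifferentiableAt ℝ (deriv v) s := by
    intro s hs
    exact ((h1v.differentiableOn one_ne_zero) s hs).differentiableAt (hIopen.mem_nhds hs)
  have hvdiff : ∀ s ∈ Set.Ioo (0:ℝ) (δ₀/2), DifferentiableAt ℝ v s := by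
    intro s hs
    exact ((hreg.differentiableOn (by norm_num)) s hs).differentiableAt (hIopen.mem_nhds hs)
  -- g = σ v' is differentiable on I
  have hgdiff : ∀ s ∈ Set.Ioo (0:ℝ) (δ₀/2),
      DifferentiableAt ℝ (fun t => σ t * deriv v t) s := by
    intro s hs
    exact (hσdiff s hs).mul (hv'diff s hs)
  -- Part 1
  have part1 : ∀ δ ∈ Set.Ioo (0:ℝ) (δ₀/2), deriv (fun t => σ t * deriv v t) δ ≤ 0 := by
    intro δ hδ
    rw [hode δ hδ]
    have hσδ : 0 < σ δ := hσpos δ hδ.1 (by have := hδ.2; linarith)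
    have hvδ : 0 < v δ := hvpos δ hδ
    have hd : 0 < (δ₀ - δ) * δ := mul_pos (by have := hδ.2; linarith) hδ.1
    have hnum : β * σ δ * ((N:ℝ) - 1) * v δ ≤ 0 := by
      have h1 : β * σ δ ≤ 0 := mul_nonpos_of_nonpos_of_nonneg hβneg.le hσδ.le
      have h2 : β * σ δ * ((N:ℝ) - 1) ≤ 0 :=
        mul_nonpos_of_nonpos_of_nonneg h1 (by linarith)
      exact mul_nonpos_of_nonpos_of_nonneg h2 hvδ.le
    exact div_nonpos_of_nonpos_of_nonneg hnum hd.le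
  -- σ v' is antitone on I
  have hmono : AntitoneOn (fun t => σ t * deriv v t) (Set.Ioo (0:ℝ) (δ₀/2)) := by
    apply antitoneOn_of_deriv_nonpos (convex_Ioo _ _)
    · intro s hs; exact (hgdiff s hs).continuousAt.continuousWithinAt
    · rw [interior_Ioo]; intro s hs; exact (hgdiff s hs).differentiableWithinAt
    · rw [interior_Ioo]; exact part1
  -- Part 2
  have part2 : ∀ ε δ : ℝ, 0 < ε → ε < δ → δ < δ₀/2 →
      v ε ≤ v δ - σ δ * deriv v δ * ∫ s in ε..δ, (σ s)⁻¹ := by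
    intro ε δ hε hεδ hδ
    have hsub : Set.Icc ε δ ⊆ Set.Ioo (0:ℝ) (δ₀/2) := fun s hs =>
      ⟨lt_of_lt_of_le hε hs.1, lt_of_le_of_lt hs.2 hδ⟩
    have huIcc : Set.uIcc ε δ = Set.Icc ε δ := Set.uIcc_of_le hεδ.le
    have hσne : ∀ s ∈ Set.Icc ε δ, σ s ≠ 0 := fun s hs =>
      (hσpos s (hsub hs).1 (by have := (hsub hs).2; linarith)).ne'
    have hσcont : ContinuousOn σ (Set.Icc ε δ) := fun s hs =>
      (hσdiff s (hsub hs)).continuousAt.continuousWithinAt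
    have hint2 : IntervalIntegrable (fun s => σ δ * deriv v δ * (σ s)⁻¹)
        MeasureTheory.volume ε δ := by
      apply ContinuousOn.intervalIntegrable
      rw [huIcc]
      exact (continuousOn_const.mul (hσcont.inv₀ hσne))
    have hint1 : IntervalIntegrable (deriv v) MeasureTheory.volume ε δ := by
      apply ContinuousOn.intervalIntegrable
      rw [huIcc]
      exact (h1v.continuousOn).mono hsub
    have hFTC : ∫ s in ε..δ, deriv v s = v δ - v ε := by
      apply intervalIntegral.integral_deriv_eq_sub
      · intro x hx; rw [huIcc] at hx; exact hvdiff x (hsub hx)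
      · exact hint1
    have hkey : ∀ s ∈ Set.Icc ε δ, σ δ * deriv v δ * (σ s)⁻¹ ≤ deriv v s := by
      intro s hs
      have hσs : 0 < σ s := hσpos s (hsub hs).1 (by have := (hsub hs).2; linarith)
      have hgs : σ δ * deriv v δ ≤ σ s * deriv v s :=
        hmono (hsub hs) ⟨by linarith [hs.1], hδ⟩ hs.2
      rw [mul_inv_le_iff₀ hσs]
      linarith [hgs]
    have hmonoInt : (∫ s in ε..δ, σ δ * deriv v δ * (σ s)⁻¹) ≤ ∫ s in ε..δ, deriv v s :=
      intervalIntegral.integral_mono_on hεδ.le hint2 hint1 hkey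
    rw [intervalIntegral.integral_const_mul] at hmonoInt
    rw [hFTC] at hmonoInt
    linarith
  refine ⟨part1, part2, ?_⟩
  -- Part 3
  have hδ4 : δ₀/4 ∈ Set.Ioo (0:ℝ) (δ₀/2) := ⟨by linarith, by linarith⟩
  set c := σ (δ₀/4) * deriv v (δ₀/4) with hc
  set cσ : ℝ := (δ₀/4) ^ (2*β) * (3*δ₀/4) ^ ((N:ℝ) - 1) with hcσ
  have hcσpos : 0 < cσ :=
    mul_pos (Real.rpow_pos_of_pos (by linarith) _) (Real.rpow_pos_of_pos (by linarith) _)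
  have hσlb : ∀ s : ℝ, 0 < s → s ≤ δ₀/4 → cσ ≤ σ s := by
    intro s hs hs'
    rw [hσ, hcσ]
    have h1 : (δ₀/4) ^ (2*β) ≤ s ^ (2*β) :=
      Real.rpow_le_rpow_of_nonpos hs hs' (by nlinarith)
    have h2 : (3*δ₀/4) ^ ((N:ℝ) - 1) ≤ (δ₀ - s) ^ ((N:ℝ) - 1) :=
      Real.rpow_le_rpow (by linarith) (by linarith) (by linarith)
    exact mul_le_mul h1 h2 (Real.rpow_pos_of_pos (by linarith) _).le
      (Real.rpow_pos_of_pos hs _).le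
  refine ⟨v (δ₀/4) + |c| * (δ₀/4 * cσ⁻¹), ?_⟩
  intro ε hε
  have h2 := part2 ε (δ₀/4) hε.1 hε.2 (by linarith)
  -- bound the integral
  have hsub : Set.Icc ε (δ₀/4) ⊆ Set.Ioo (0:ℝ) (δ₀/2) := fun s hs =>
    ⟨lt_of_lt_of_le hε.1 hs.1, lt_of_le_of_lt hs.2 (by linarith)⟩
  have huIcc : Set.uIcc ε (δ₀/4) = Set.Icc ε (δ₀/4) := Set.uIcc_of_le hε.2.le
  have hσne : ∀ s ∈ Set.Icc ε (δ₀/4), σ s ≠ 0 := fun s hs =>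
    (hσpos s (hsub hs).1 (by have := (hsub hs).2; linarith)).ne'
  have hσcont : ContinuousOn σ (Set.Icc ε (δ₀/4)) := fun s hs =>
    (hσdiff s (hsub hs)).continuousAt.continuousWithinAt
  have hint : IntervalIntegrable (fun s => (σ s)⁻¹) MeasureTheory.volume ε (δ₀/4) := by
    apply ContinuousOn.intervalIntegrable
    rw [huIcc]
    exact hσcont.inv₀ hσne
  have hJnonneg : 0 ≤ ∫ s in ε..(δ₀/4), (σ s)⁻¹ := by
    apply intervalIntegral.integral_nonneg hε.2.le
    intro s hs
    exact (inv_pos.mpr (hσpos s (hsub hs).1 (by have := (hsub hs).2; linarith))).le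
  have hJub : (∫ s in ε..(δ₀/4), (σ s)⁻¹) ≤ δ₀/4 * cσ⁻¹ := by
    have hb : (∫ s in ε..(δ₀/4), (σ s)⁻¹) ≤ ∫ _ in ε..(δ₀/4), cσ⁻¹ := by
      apply intervalIntegral.integral_mono_on hε.2.le hint intervalIntegrable_const
      intro s hs
      exact inv_anti₀ hcσpos (hσlb s (hsub hs).1 hs.2)
    rw [intervalIntegral.integral_const] at hb
    have : (δ₀/4 - ε) * cσ⁻¹ ≤ δ₀/4 * cσ⁻¹ :=
      mul_le_mul_of_nonneg_right (by linarith [hε.1]) (inv_pos.mpr hcσpos).le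
    calc (∫ s in ε..(δ₀/4), (σ s)⁻¹) ≤ (δ₀/4 - ε) • cσ⁻¹ := hb
      _ = (δ₀/4 - ε) * cσ⁻¹ := by rw [smul_eq_mul]
      _ ≤ δ₀/4 * cσ⁻¹ := this
  have habs : -c * (∫ s in ε..(δ₀/4), (σ s)⁻¹) ≤ |c| * (δ₀/4 * cσ⁻¹) := by
    have h1 : -c * (∫ s in ε..(δ₀/4), (σ s)⁻¹) ≤ |c| * (∫ s in ε..(δ₀/4), (σ s)⁻¹) :=
      mul_le_mul_of_nonneg_right (neg_le_abs c) hJnonneg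
    have h2 : |c| * (∫ s in ε..(δ₀/4), (σ s)⁻¹) ≤ |c| * (δ₀/4 * cσ⁻¹) :=
      mul_le_mul_of_nonneg_left hJub (abs_nonneg c)
    linarith
  have hcc : σ (δ₀/4) * deriv v (δ₀/4) = c := rfl
  rw [hcc] at h2
  linarith
end

section
/- Let h be harmonic in a strip Ω_{δ₀} with |h|, |∇h| bounded, μ < 1/4, μ ≠ 0, β = β₋, and let α ∈ (0,1) with α < 1 - 2β if β > 0. Then there exists δ₁ ∈ (0, δ₀] such that for every A > 1, the function w̄ = h + A δ^α satisfies Δw̄ + (2β/δ)⟨∇δ, ∇w̄⟩ + (β Δδ/δ) w̄ ≤ 0 in Ω_{δ₁}; hence δ^β w̄ is a local super-harmonic function (Δ + μ/δ²)(δ^β w̄) ≤ 0. -/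
open RealInnerProductSpace

/-- The Laplacian of `f : ℝᴺ → ℝ`, as the sum of the second partial derivatives. -/
noncomputable def lap {N : ℕ} (f : EuclideanSpace ℝ (Fin N) → ℝ)
    (x : EuclideanSpace ℝ (Fin N)) : ℝ :=
  ∑ i : Fin N, fderiv ℝ (fun y => fderiv ℝ f y (EuclideanSpace.single i 1)) x
    (EuclideanSpace.single i 1)

namespace Stmt14Aux

open Filter Topology ContDiff

variable {N : ℕ}

noncomputable def pd (i : Fin N) (f : EuclideanSpace ℝ (Fin N) → ℝ)
    (x : EuclideanSpace ℝ (Fin N)) : ℝ :=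
  fderiv ℝ f x (EuclideanSpace.single i 1)

noncomputable def sd (i : Fin N) (f : EuclideanSpace ℝ (Fin N) → ℝ)
    (x : EuclideanSpace ℝ (Fin N)) : ℝ :=
  fderiv ℝ (fun y => fderiv ℝ f y (EuclideanSpace.single i 1)) x (EuclideanSpace.single i 1)

lemma lap_eq (f : EuclideanSpace ℝ (Fin N) → ℝ) (x : EuclideanSpace ℝ (Fin N)) :
    lap f x = ∑ i, sd i f x := rfl

variable {f g δ : EuclideanSpace ℝ (Fin N) → ℝ} {x : EuclideanSpace ℝ (Fin N)}

lemma cd_pd (hf : ContDiffAt ℝ 2 f x) (i : Fin N) :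
    ContDiffAt ℝ 1 (fun y => fderiv ℝ f y (EuclideanSpace.single i 1)) x :=
  (hf.fderiv_right (by norm_num)).clm_apply contDiffAt_const

lemma diff_pd (hf : ContDiffAt ℝ 2 f x) (i : Fin N) :
    DifferentiableAt ℝ (fun y => fderiv ℝ f y (EuclideanSpace.single i 1)) x :=
  (cd_pd hf i).differentiableAt one_ne_zero

lemma ev_diff (hf : ContDiffAt ℝ 2 f x) : ∀ᶠ y in 𝓝 x, DifferentiableAt ℝ f y :=
  (hf.eventually (by norm_num)).mono fun _ hy => hy.differentiableAt (by norm_num)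

lemma sd_add (hf : ContDiffAt ℝ 2 f x) (hg : ContDiffAt ℝ 2 g x) (i : Fin N) :
    sd i (fun y => f y + g y) x = sd i f x + sd i g x := by
  have hev : (fun y => fderiv ℝ (fun z => f z + g z) y (EuclideanSpace.single i 1)) =ᶠ[𝓝 x]
      fun y => fderiv ℝ f y (EuclideanSpace.single i 1)
        + fderiv ℝ g y (EuclideanSpace.single i 1) := by
    filter_upwards [ev_diff hf, ev_diff hg] with y h1 h2
    rw [fderiv_fun_add h1 h2]; rfl
  unfold sd
  rw [hev.fderiv_eq, fderiv_fun_add (diff_pd hf i) (diff_pd hg i)]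
  rfl

lemma sd_const_mul (hf : ContDiffAt ℝ 2 f x) (c : ℝ) (i : Fin N) :
    sd i (fun y => c * f y) x = c * sd i f x := by
  have hev : (fun y => fderiv ℝ (fun z => c * f z) y (EuclideanSpace.single i 1)) =ᶠ[𝓝 x]
      fun y => c * fderiv ℝ f y (EuclideanSpace.single i 1) := by
    filter_upwards [ev_diff hf] with y h1
    rw [fderiv_const_mul h1]; rfl
  unfold sd
  rw [hev.fderiv_eq, fderiv_const_mul (diff_pd hf i)]
  rfl

lemma sd_mul (hf : ContDiffAt ℝ 2 f x) (hg : ContDiffAt ℝ 2 g x) (i : Fin N) :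
    sd i (fun y => f y * g y) x
      = g x * sd i f x + 2 * (pd i f x * pd i g x) + f x * sd i g x := by
  have hev : (fun y => fderiv ℝ (fun z => f z * g z) y (EuclideanSpace.single i 1)) =ᶠ[𝓝 x]
      fun y => f y * fderiv ℝ g y (EuclideanSpace.single i 1)
        + g y * fderiv ℝ f y (EuclideanSpace.single i 1) := by
    filter_upwards [ev_diff hf, ev_diff hg] with y h1 h2
    rw [fderiv_fun_mul h1 h2]
    simp [ContinuousLinearMap.add_apply, ContinuousLinearMap.smul_apply, smul_eq_mul]
  unfold sd
  rw [hev.fderiv_eq,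
    fderiv_fun_add ((hf.differentiableAt (by norm_num)).fun_mul (diff_pd hg i))
      ((hg.differentiableAt (by norm_num)).fun_mul (diff_pd hf i)),
    fderiv_fun_mul (hf.differentiableAt (by norm_num)) (diff_pd hg i),
    fderiv_fun_mul (hg.differentiableAt (by norm_num)) (diff_pd hf i)]
  simp only [ContinuousLinearMap.add_apply, ContinuousLinearMap.smul_apply, smul_eq_mul]
  unfold pd
  ring

lemma pd_add (hf : DifferentiableAt ℝ f x) (hg : DifferentiableAt ℝ g x) (i : Fin N) :
    pd i (fun y => f y + g y) x = pd i f x + pd i g x := by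
  unfold pd; rw [fderiv_fun_add hf hg]; rfl

lemma pd_const_mul (hf : DifferentiableAt ℝ f x) (c : ℝ) (i : Fin N) :
    pd i (fun y => c * f y) x = c * pd i f x := by
  unfold pd; rw [fderiv_const_mul hf]; rfl

lemma pd_rpow (hδd : DifferentiableAt ℝ δ x) (hd : δ x ≠ 0) (c : ℝ) (i : Fin N) :
    pd i (fun y => δ y ^ c) x = c * δ x ^ (c - 1) * pd i δ x := by
  have H : HasFDerivAt (fun y => δ y ^ c) ((c * δ x ^ (c - 1)) • fderiv ℝ δ x) x :=
    (Real.hasDerivAt_rpow_const (p := c) (Or.inl hd)).comp_hasFDerivAt x hδd.hasFDerivAt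
  unfold pd
  rw [H.fderiv]
  simp [mul_assoc]

lemma sd_rpow (hδ2 : ContDiffAt ℝ 2 δ x) (hd : δ x ≠ 0) (c : ℝ) (i : Fin N) :
    sd i (fun y => δ y ^ c) x
      = c * (c - 1) * δ x ^ (c - 2) * (pd i δ x * pd i δ x)
        + c * δ x ^ (c - 1) * sd i δ x := by
  have hne : ∀ᶠ y in 𝓝 x, δ y ≠ 0 := hδ2.continuousAt.eventually_ne hd
  have hev : (fun y => fderiv ℝ (fun z => δ z ^ c) y (EuclideanSpace.single i 1)) =ᶠ[𝓝 x]
      fun y => (c * δ y ^ (c - 1)) * fderiv ℝ δ y (EuclideanSpace.single i 1) := by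
    filter_upwards [ev_diff hδ2, hne] with y h1 h2
    have H : HasFDerivAt (fun z => δ z ^ c) ((c * δ y ^ (c - 1)) • fderiv ℝ δ y) y :=
      (Real.hasDerivAt_rpow_const (p := c) (Or.inl h2)).comp_hasFDerivAt y h1.hasFDerivAt
    rw [H.fderiv]
    simp [mul_assoc]
  have h0 : HasFDerivAt (fun y => δ y ^ (c - 1))
      (((c - 1) * δ x ^ (c - 2)) • fderiv ℝ δ x) x := by
    have h1 := (Real.hasDerivAt_rpow_const (p := c - 1) (Or.inl hd)).comp_hasFDerivAt x
      (hδ2.differentiableAt (by norm_num)).hasFDerivAt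
    simpa only [show c - 1 - 1 = c - 2 from by ring, Function.comp_def] using h1
  have hg1 : HasFDerivAt (fun y => c * δ y ^ (c - 1))
      ((c * ((c - 1) * δ x ^ (c - 2))) • fderiv ℝ δ x) x := by
    simpa only [smul_smul] using h0.const_mul c
  unfold sd
  rw [hev.fderiv_eq,
    fderiv_fun_mul hg1.differentiableAt (diff_pd hδ2 i), hg1.fderiv]
  simp only [ContinuousLinearMap.add_apply, ContinuousLinearMap.smul_apply, smul_eq_mul]
  unfold pd
  ring

lemma inner_gradient (f : EuclideanSpace ℝ (Fin N) → ℝ) (x v : EuclideanSpace ℝ (Fin N)) :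
    ⟪gradient f x, v⟫ = fderiv ℝ f x v := by
  rw [gradient]
  exact InnerProductSpace.toDual_symm_apply

lemma sum_pd_mul (f g : EuclideanSpace ℝ (Fin N) → ℝ) (x : EuclideanSpace ℝ (Fin N)) :
    ∑ i, pd i f x * pd i g x = ⟪gradient f x, gradient g x⟫ := by
  have hp : ∀ (f : EuclideanSpace ℝ (Fin N) → ℝ) (i : Fin N), pd i f x = gradient f x i := by
    intro f i
    rw [pd, ← inner_gradient f x (EuclideanSpace.single i 1),
      EuclideanSpace.inner_single_right]
    simp
  simp only [hp]
  rw [PiLp.inner_apply]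
  simp [RCLike.inner_apply]
  exact Finset.sum_congr rfl fun _ _ => mul_comm _ _

end Stmt14Aux

open Stmt14Aux

set_option maxHeartbeats 1600000

/-- For `h` harmonic and bounded with bounded gradient in a boundary strip, there is
`δ₁ ∈ (0, δ₀]` such that for every `A > 1` the function `w̄ = h + Aδ^α` satisfies
`Δw̄ + (2β/δ)⟨∇δ,∇w̄⟩ + (βΔδ/δ)w̄ ≤ 0` in `Ω_{δ₁}`; hence `δ^β w̄` is a local
super-harmonic: `Δ(δ^β w̄) + μ(δ^β w̄)/δ² ≤ 0`. -/
theorem stmt14 {N : ℕ} (Ω : Set (EuclideanSpace ℝ (Fin N)))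
    (hΩ : IsOpen Ω) (hΩb : Bornology.IsBounded Ω)
    (δ : EuclideanSpace ℝ (Fin N) → ℝ)
    (hδ : δ = fun x => Metric.infDist x (frontier Ω))
    (μ β α δ₀ : ℝ) (hμ : μ < 1/4) (hμ0 : μ ≠ 0)
    (hβ : β = 1/2 - Real.sqrt (1/4 - μ))
    (hα0 : 0 < α) (hα1 : α < 1) (hα2 : 0 < β → α < 1 - 2*β) (hδ₀ : 0 < δ₀)
    (hregδ : ContDiffOn ℝ 2 δ {x ∈ Ω | δ x < δ₀})
    (hgradδ : ∀ x ∈ {x ∈ Ω | δ x < δ₀}, ‖gradient δ x‖ = 1)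
    (Cδ : ℝ) (hΔδbd : ∀ x ∈ {x ∈ Ω | δ x < δ₀}, |lap δ x| ≤ Cδ)
    (h : EuclideanSpace ℝ (Fin N) → ℝ)
    (hregh : ContDiffOn ℝ 2 h {x ∈ Ω | δ x < δ₀})
    (hharm : ∀ x ∈ {x ∈ Ω | δ x < δ₀}, lap h x = 0)
    (Ch : ℝ) (hhbd : ∀ x ∈ {x ∈ Ω | δ x < δ₀}, |h x| ≤ Ch ∧ ‖gradient h x‖ ≤ Ch) :
    ∃ δ₁ ∈ Set.Ioc (0:ℝ) δ₀, ∀ A : ℝ, 1 < A →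
      ∀ x ∈ {x ∈ Ω | δ x < δ₁},
        (lap (fun y => h y + A * δ y ^ α) x
          + 2 * β / δ x * ⟪gradient δ x, gradient (fun y => h y + A * δ y ^ α) x⟫
          + β * lap δ x / δ x * (h x + A * δ x ^ α) ≤ 0) ∧
        (lap (fun y => δ y ^ β * (h y + A * δ y ^ α)) x
          + μ / (δ x)^2 * (δ x ^ β * (h x + A * δ x ^ α)) ≤ 0) := by
  have hδc : Continuous δ := by
    rw [hδ]; exact Metric.continuous_infDist_pt _
  have hSopen : IsOpen {x ∈ Ω | δ x < δ₀} := by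
    have : {x ∈ Ω | δ x < δ₀} = Ω ∩ δ ⁻¹' (Set.Iio δ₀) := rfl
    rw [this]; exact hΩ.inter (isOpen_Iio.preimage hδc)
  have hpos : ∀ x ∈ {x ∈ Ω | δ x < δ₀}, 0 < δ x := by
    intro x hx
    rcases Set.eq_empty_or_nonempty (frontier Ω) with hfr | hfr
    · exfalso
      have hδ0 : δ = fun _ => (0:ℝ) := by
        rw [hδ, hfr]; funext y; simp [Metric.infDist_empty]
      have h1 := hgradδ x hx
      rw [hδ0] at h1
      simp [gradient] at h1
    · have hxf : x ∉ frontier Ω := fun hmem => (hΩ.frontier_eq ▸ hmem).2 hx.1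
      have := (isClosed_frontier.notMem_iff_infDist_pos hfr).mp hxf
      rw [hδ]; exact this
  have hβlt : β < 1/2 := by
    have h4 : (0:ℝ) < 1/4 - μ := by
      rcases lt_or_gt_of_ne hμ0 with h1 | h1 <;> nlinarith
    have := Real.sqrt_pos.mpr h4
    rw [hβ]; linarith
  have hcpos : 0 < α * (1 - α - 2*β) := by
    rcases le_or_gt β 0 with hb | hb
    · exact mul_pos hα0 (by nlinarith)
    · exact mul_pos hα0 (by nlinarith [hα2 hb])
  obtain ⟨δ₁, hδ₁0, hδ₁le, hgood⟩ : ∃ δ₁, 0 < δ₁ ∧ δ₁ ≤ δ₀ ∧ ∀ t : ℝ, 0 ≤ t → t < δ₁ →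
      (α + |β|) * |Cδ| * t + |β| * |Ch| * (2 + |Cδ|) * t ^ (1-α) < α*(1-α-2*β) := by
    have hcont : ContinuousAt (fun t : ℝ => (α + |β|) * |Cδ| * t + |β| * |Ch| * (2 + |Cδ|) * t ^ (1-α)) 0 := by
      apply ContinuousAt.add
      · exact (continuous_const.mul continuous_id).continuousAt
      · exact continuousAt_const.mul
          (Real.continuousAt_rpow_const 0 (1-α) (Or.inr (by linarith)))
    have h0 : (α + |β|) * |Cδ| * (0:ℝ) + |β| * |Ch| * (2 + |Cδ|) * (0:ℝ) ^ (1-α) = 0 := by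
      rw [Real.zero_rpow (by linarith : (1:ℝ)-α ≠ 0)]; ring
    have htd := hcont.tendsto
    rw [h0] at htd
    have hev := htd.eventually (eventually_lt_nhds hcpos)
    rw [Metric.eventually_nhds_iff] at hev
    obtain ⟨ε, hε, hball⟩ := hev
    refine ⟨min δ₀ (ε/2), by positivity, min_le_left _ _, ?_⟩
    intro t ht0 htlt
    apply hball
    rw [Real.dist_eq, sub_zero, abs_of_nonneg ht0]
    calc t < min δ₀ (ε/2) := htlt
      _ ≤ ε/2 := min_le_right _ _
      _ < ε := by linarith
  refine ⟨δ₁, ⟨hδ₁0, hδ₁le⟩, ?_⟩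
  intro A hA x hx
  obtain ⟨hxΩ, hxd⟩ := hx
  have hxS : x ∈ {x ∈ Ω | δ x < δ₀} := ⟨hxΩ, lt_of_lt_of_le hxd hδ₁le⟩
  have hd : 0 < δ x := hpos x hxS
  have hdne : δ x ≠ 0 := ne_of_gt hd
  have hA0 : (0:ℝ) < A := lt_trans one_pos hA
  -- regularity at x
  have hδ2 : ContDiffAt ℝ 2 δ x := hregδ.contDiffAt (hSopen.mem_nhds hxS)
  have hh2 : ContDiffAt ℝ 2 h x := hregh.contDiffAt (hSopen.mem_nhds hxS)
  have hρ : ∀ c : ℝ, ContDiffAt ℝ 2 (fun y => δ y ^ c) x := fun c =>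
    (Real.contDiffAt_rpow_const_of_ne hdne).comp x hδ2
  have hw2 : ContDiffAt ℝ 2 (fun y => h y + A * δ y ^ α) x :=
    hh2.add (contDiffAt_const.mul (hρ α))
  -- bounds at x
  have hL : |lap δ x| ≤ Cδ := hΔδbd x hxS
  have hH : |h x| ≤ Ch := (hhbd x hxS).1
  have hP : |⟪gradient δ x, gradient h x⟫| ≤ Ch := by
    calc |⟪gradient δ x, gradient h x⟫| ≤ ‖gradient δ x‖ * ‖gradient h x‖ :=
          abs_real_inner_le_norm _ _
      _ = ‖gradient h x‖ := by rw [hgradδ x hxS, one_mul]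
      _ ≤ Ch := (hhbd x hxS).2
  have hCδ0 : 0 ≤ Cδ := le_trans (abs_nonneg _) hL
  have hCh0 : 0 ≤ Ch := le_trans (abs_nonneg _) hH
  -- sums
  have hsum1 : ∑ i, pd i δ x * pd i δ x = 1 := by
    rw [sum_pd_mul, real_inner_self_eq_norm_sq, hgradδ x hxS]; norm_num
  have hsumδh : ∑ i, pd i δ x * pd i h x = ⟪gradient δ x, gradient h x⟫ := sum_pd_mul δ h x
  have hsumsdδ : ∑ i, sd i δ x = lap δ x := (lap_eq δ x).symm
  have hsumsdh : ∑ i, sd i h x = 0 := by rw [← lap_eq]; exact hharm x hxS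
  -- pointwise derivative formulas
  have hpdw : ∀ i, pd i (fun y => h y + A * δ y ^ α) x
      = pd i h x + A * (α * δ x ^ (α-1) * pd i δ x) := by
    intro i
    rw [pd_add (hh2.differentiableAt (by norm_num))
        ((contDiffAt_const.mul (hρ α)).differentiableAt (by norm_num)),
      pd_const_mul ((hρ α).differentiableAt (by norm_num)),
      pd_rpow (hδ2.differentiableAt (by norm_num)) hdne]
  have hsdw : ∀ i, sd i (fun y => h y + A * δ y ^ α) x
      = sd i h x + A * (α * (α-1) * δ x ^ (α-2) * (pd i δ x * pd i δ x)
        + α * δ x ^ (α-1) * sd i δ x) := by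
    intro i
    rw [sd_add hh2 (contDiffAt_const.mul (hρ α)) i, sd_const_mul (hρ α) A i,
      sd_rpow hδ2 hdne α i]
  have hlapw : lap (fun y => h y + A * δ y ^ α) x
      = A*α*(α-1)*δ x^(α-2) + A*α*δ x^(α-1)*lap δ x := by
    have hstep : lap (fun y => h y + A * δ y ^ α) x
        = (∑ i, sd i h x) + (A*(α*(α-1))*δ x^(α-2))*(∑ i, pd i δ x * pd i δ x)
          + (A*α*δ x^(α-1))*(∑ i, sd i δ x) := by
      rw [lap_eq, Finset.mul_sum, Finset.mul_sum, ← Finset.sum_add_distrib,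
        ← Finset.sum_add_distrib]
      exact Finset.sum_congr rfl fun i _ => by rw [hsdw i]; ring
    rw [hstep, hsum1, hsumsdδ, hsumsdh]; ring
  have hgradw : ⟪gradient δ x, gradient (fun y => h y + A * δ y ^ α) x⟫
      = ⟪gradient δ x, gradient h x⟫ + A*α*δ x^(α-1) := by
    rw [← sum_pd_mul]
    have hstep : (∑ i, pd i δ x * pd i (fun y => h y + A * δ y ^ α) x)
        = (∑ i, pd i δ x * pd i h x) + (A*α*δ x^(α-1))*(∑ i, pd i δ x * pd i δ x) := by
      rw [Finset.mul_sum, ← Finset.sum_add_distrib]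
      exact Finset.sum_congr rfl fun i _ => by rw [hpdw i]; ring
    rw [hstep, hsum1, hsumδh]; ring
  -- second partials of v = δ^β * w
  have hpdρβ : ∀ i, pd i (fun y => δ y ^ β) x = β * δ x ^ (β-1) * pd i δ x :=
    fun i => pd_rpow (hδ2.differentiableAt (by norm_num)) hdne β i
  have hsdv : ∀ i : Fin N, sd i (fun y => δ y ^ β * (h y + A * δ y ^ α)) x
      = ((h x + A * δ x ^ α) * (β*(β-1)*δ x^(β-2)) + 2*β*δ x^(β-1)*(A*α*δ x^(α-1))
          + δ x^β*(A*α*(α-1)*δ x^(α-2))) * (pd i δ x * pd i δ x)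
        + ((h x + A * δ x ^ α) * (β*δ x^(β-1)) + δ x^β*(A*α*δ x^(α-1))) * sd i δ x
        + (2*β*δ x^(β-1)) * (pd i δ x * pd i h x)
        + (δ x^β) * sd i h x := by
    intro i
    rw [sd_mul (hρ β) hw2 i, sd_rpow hδ2 hdne β i, hsdw i, hpdw i, hpdρβ i]
    ring
  have hlapv : lap (fun y => δ y ^ β * (h y + A * δ y ^ α)) x
      = ((h x + A * δ x ^ α) * (β*(β-1)*δ x^(β-2)) + 2*β*δ x^(β-1)*(A*α*δ x^(α-1))
          + δ x^β*(A*α*(α-1)*δ x^(α-2)))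
        + ((h x + A * δ x ^ α) * (β*δ x^(β-1)) + δ x^β*(A*α*δ x^(α-1))) * lap δ x
        + (2*β*δ x^(β-1)) * ⟪gradient δ x, gradient h x⟫ := by
    have hstep : lap (fun y => δ y ^ β * (h y + A * δ y ^ α)) x
        = ((h x + A * δ x ^ α) * (β*(β-1)*δ x^(β-2)) + 2*β*δ x^(β-1)*(A*α*δ x^(α-1))
            + δ x^β*(A*α*(α-1)*δ x^(α-2))) * (∑ i, pd i δ x * pd i δ x)
          + ((h x + A * δ x ^ α) * (β*δ x^(β-1)) + δ x^β*(A*α*δ x^(α-1))) * (∑ i, sd i δ x)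
          + (2*β*δ x^(β-1)) * (∑ i, pd i δ x * pd i h x)
          + (δ x^β) * (∑ i, sd i h x) := by
      rw [lap_eq, Finset.mul_sum, Finset.mul_sum, Finset.mul_sum, Finset.mul_sum,
        ← Finset.sum_add_distrib, ← Finset.sum_add_distrib, ← Finset.sum_add_distrib]
      exact Finset.sum_congr rfl fun i _ => hsdv i
    rw [hstep, hsum1, hsumδh, hsumsdδ, hsumsdh]; ring
  -- rpow identities
  have hXne : δ x ^ α ≠ 0 := (Real.rpow_pos_of_pos hd α).ne'
  have hYne : δ x ^ β ≠ 0 := (Real.rpow_pos_of_pos hd β).ne'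
  have hsq : δ x ^ (2:ℝ) = δ x * δ x := by
    rw [show (2:ℝ) = ((2:ℕ):ℝ) by norm_num, Real.rpow_natCast]; ring
  have eA1 : δ x ^ (α-1) = δ x ^ α / δ x := by
    rw [Real.rpow_sub hd, Real.rpow_one]
  have eA2 : δ x ^ (α-2) = δ x ^ α / (δ x * δ x) := by
    rw [Real.rpow_sub hd, hsq]
  have eA3 : δ x ^ (1-α) = δ x / δ x ^ α := by
    rw [Real.rpow_sub hd, Real.rpow_one]
  have eB1 : δ x ^ (β-1) = δ x ^ β / δ x := by
    rw [Real.rpow_sub hd, Real.rpow_one]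
  have eB2 : δ x ^ (β-2) = δ x ^ β / (δ x * δ x) := by
    rw [Real.rpow_sub hd, hsq]
  have hμeq : μ = β - β*β := by
    have h4 : (0:ℝ) ≤ 1/4 - μ := by linarith
    have h5 : ((1:ℝ)/2 - β) = Real.sqrt (1/4-μ) := by rw [hβ]; ring
    have h6 : ((1:ℝ)/2 - β)^2 = 1/4 - μ := by rw [h5]; exact Real.sq_sqrt h4
    linear_combination h6
  -- the key identity for the first operator
  have hEid : lap (fun y => h y + A * δ y ^ α) x
      + 2 * β / δ x * ⟪gradient δ x, gradient (fun y => h y + A * δ y ^ α) x⟫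
      + β * lap δ x / δ x * (h x + A * δ x ^ α)
      = δ x ^ (α-2) * (A*α*(α+2*β-1) + A*(α+β)*δ x*lap δ x
          + δ x^(1-α)*(2*β*⟪gradient δ x, gradient h x⟫ + β*lap δ x*h x)) := by
    rw [hlapw, hgradw, eA1, eA2, eA3]
    revert hdne hXne
    generalize ⟪gradient δ x, gradient h x⟫ = P
    generalize lap δ x = L0
    generalize h x = H0
    generalize δ x ^ α = X
    generalize δ x = d
    intro hdne hXne
    field_simp
    ring
  -- the first inequality
  have key1 : lap (fun y => h y + A * δ y ^ α) x
      + 2 * β / δ x * ⟪gradient δ x, gradient (fun y => h y + A * δ y ^ α) x⟫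
      + β * lap δ x / δ x * (h x + A * δ x ^ α) ≤ 0 := by
    have habs : |Cδ| = Cδ := abs_of_nonneg hCδ0
    have habs2 : |Ch| = Ch := abs_of_nonneg hCh0
    have hgx := hgood (δ x) hd.le hxd
    rw [habs, habs2] at hgx
    have hr0 : (0:ℝ) ≤ δ x ^ (1-α) := Real.rpow_nonneg hd.le _
    have b1 : A*(α+β)*δ x*lap δ x ≤ A*((α + |β|)*Cδ)*δ x := by
      have h1 : (α+β)*lap δ x ≤ (α + |β|)*Cδ := by
        calc (α+β)*lap δ x ≤ |(α+β)*lap δ x| := le_abs_self _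
          _ = |α+β| * |lap δ x| := abs_mul _ _
          _ ≤ (α + |β|)*Cδ := by
              apply mul_le_mul _ hL (abs_nonneg _) (by positivity)
              calc |α+β| ≤ |α| + |β| := abs_add_le _ _
                _ = α + |β| := by rw [abs_of_pos hα0]
      calc A*(α+β)*δ x*lap δ x = (A*δ x)*((α+β)*lap δ x) := by ring
        _ ≤ (A*δ x)*((α + |β|)*Cδ) := by
            apply mul_le_mul_of_nonneg_left h1 (by positivity)
        _ = A*((α + |β|)*Cδ)*δ x := by ring
    have b2 : δ x^(1-α)*(2*β*⟪gradient δ x, gradient h x⟫ + β*lap δ x*h x)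
        ≤ δ x^(1-α)*(A*(|β| * Ch*(2+Cδ))) := by
      apply mul_le_mul_of_nonneg_left _ hr0
      have h2 : 2*β*⟪gradient δ x, gradient h x⟫ + β*lap δ x*h x ≤ |β| * Ch*(2+Cδ) := by
        have habsP := abs_nonneg (⟪gradient δ x, gradient h x⟫)
        calc 2*β*⟪gradient δ x, gradient h x⟫ + β*lap δ x*h x
            ≤ |2*β*⟪gradient δ x, gradient h x⟫ + β*lap δ x*h x| := le_abs_self _
          _ ≤ |2*β*⟪gradient δ x, gradient h x⟫| + |β*lap δ x*h x| := abs_add_le _ _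
          _ = 2*|β| * |⟪gradient δ x, gradient h x⟫| + |β| * (|lap δ x| * |h x|) := by
              rw [abs_mul, abs_mul, abs_mul, abs_mul]
              simp [abs_of_nonneg (by norm_num : (0:ℝ) ≤ 2)]
              ring
          _ ≤ 2*|β| * Ch + |β| * (Cδ*Ch) := by
              have t1 : 2*|β| * |⟪gradient δ x, gradient h x⟫| ≤ 2*|β| * Ch :=
                mul_le_mul_of_nonneg_left hP (by positivity)
              have t2 : |β| * (|lap δ x| * |h x|) ≤ |β| * (Cδ*Ch) := by
                apply mul_le_mul_of_nonneg_left _ (abs_nonneg β)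
                exact mul_le_mul hL hH (abs_nonneg _) hCδ0
              linarith
          _ = |β| * Ch*(2+Cδ) := by ring
      calc 2*β*⟪gradient δ x, gradient h x⟫ + β*lap δ x*h x ≤ |β| * Ch*(2+Cδ) := h2
        _ ≤ A*(|β| * Ch*(2+Cδ)) := le_mul_of_one_le_left (by positivity) hA.le
    have hc' : A*((α + |β|) * Cδ * δ x + |β| * Ch * (2 + Cδ) * δ x ^ (1-α))
        < A*(α*(1-α-2*β)) := mul_lt_mul_of_pos_left hgx hA0
    have hE : A*α*(α+2*β-1) + A*(α+β)*δ x*lap δ x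
        + δ x^(1-α)*(2*β*⟪gradient δ x, gradient h x⟫ + β*lap δ x*h x) ≤ 0 := by
      linarith [b1, b2, hc']
    rw [hEid]
    calc δ x ^ (α-2) * (A*α*(α+2*β-1) + A*(α+β)*δ x*lap δ x
          + δ x^(1-α)*(2*β*⟪gradient δ x, gradient h x⟫ + β*lap δ x*h x))
        ≤ δ x ^ (α-2) * 0 := by
          apply mul_le_mul_of_nonneg_left hE (Real.rpow_nonneg hd.le _)
      _ = 0 := mul_zero _
  -- the second identity
  have hVid : lap (fun y => δ y ^ β * (h y + A * δ y ^ α)) x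
      + μ / (δ x)^2 * (δ x ^ β * (h x + A * δ x ^ α))
      = δ x ^ β * (lap (fun y => h y + A * δ y ^ α) x
        + 2 * β / δ x * ⟪gradient δ x, gradient (fun y => h y + A * δ y ^ α) x⟫
        + β * lap δ x / δ x * (h x + A * δ x ^ α)) := by
    rw [hlapv, hlapw, hgradw, hμeq, eA1, eA2, eB1, eB2]
    revert hdne hXne hYne
    generalize ⟪gradient δ x, gradient h x⟫ = P
    generalize lap δ x = L0
    generalize h x = H0
    generalize δ x ^ α = X
    generalize δ x ^ β = Y
    generalize δ x = d
    intro hdne hXne hYne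
    field_simp
    ring
  refine ⟨key1, ?_⟩
  rw [hVid]
  calc δ x ^ β * (lap (fun y => h y + A * δ y ^ α) x
        + 2 * β / δ x * ⟪gradient δ x, gradient (fun y => h y + A * δ y ^ α) x⟫
        + β * lap δ x / δ x * (h x + A * δ x ^ α))
      ≤ δ x ^ β * 0 := by
        apply mul_le_mul_of_nonneg_left key1 (Real.rpow_nonneg hd.le _)
    _ = 0 := mul_zero _
end

section
/- Let μ ∈ (0, C_H(Ω)) and suppose the Martin kernel K(x,y) satisfies c⁻¹ δ(x)^{β₊} |x-y|^{2β₋ - N} ≤ K(x,y) ≤ c δ(x)^{β₊} |x-y|^{2β₋ - N} for all x ∈ Ω, y ∈ ∂Ω, with c > 1. If the boundary satisfies |∂Ω ∩ B_{δ(x)/2}(x*)| ≥ ε₀ δ(x)^{N-1} for x in a strip Ω_{δ₀}, then z(x) = ∫_{∂Ω} K(x,y) dS_y satisfies z(x) ≥ c₀ δ(x)^{β₋} in Ω_{δ₀} for some constant c₀ > 0; in particular liminf_{δ(x)→0} z(x)/δ(x)^{β₋} > 0. -/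
open MeasureTheory

/-- If the Martin kernel satisfies the two-sided estimate
`c⁻¹δ(x)^{β₊}|x-y|^{2β₋-N} ≤ K(x,y) ≤ cδ(x)^{β₊}|x-y|^{2β₋-N}` and the boundary has the
density property `|∂Ω ∩ B_{δ(x)/2}(x*)| ≥ ε₀δ(x)^{N-1}`, then
`z(x) = ∫_{∂Ω} K(x,y) dS(y)` satisfies `z(x) ≥ c₀δ(x)^{β₋}` in a boundary strip. -/
theorem stmt15 {N : ℕ} (hN : 1 ≤ N) (Ω : Set (EuclideanSpace ℝ (Fin N)))
    (hΩ : IsOpen Ω) (hΩb : Bornology.IsBounded Ω)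
    (δ : EuclideanSpace ℝ (Fin N) → ℝ)
    (hδ : δ = fun x => Metric.infDist x (frontier Ω))
    (μ CH βm βp : ℝ) (hμ0 : 0 < μ) (hμCH : μ < CH) (hCH : CH ≤ 1/4)
    (hβm : βm = 1/2 - Real.sqrt (1/4 - μ)) (hβp : βp = 1/2 + Real.sqrt (1/4 - μ))
    -- the surface measure on `∂Ω`
    (ν : Measure (EuclideanSpace ℝ (Fin N))) [IsFiniteMeasure ν]
    -- the Martin kernel and its two-sided estimate
    (K : EuclideanSpace ℝ (Fin N) → EuclideanSpace ℝ (Fin N) → ℝ) (c : ℝ) (hc : 1 < c)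
    (hK : ∀ x ∈ Ω, ∀ y ∈ frontier Ω,
      c⁻¹ * δ x ^ βp * ‖x - y‖ ^ (2*βm - N) ≤ K x y ∧
      K x y ≤ c * δ x ^ βp * ‖x - y‖ ^ (2*βm - N))
    (hKint : ∀ x ∈ Ω, IntegrableOn (K x) (frontier Ω) ν)
    (hKnn : ∀ x ∈ Ω, ∀ y ∈ frontier Ω, 0 ≤ K x y)
    -- the projection `x*` onto the boundary
    (xs : EuclideanSpace ℝ (Fin N) → EuclideanSpace ℝ (Fin N))
    (δ₀ : ℝ) (hδ₀ : 0 < δ₀)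
    (hxs : ∀ x ∈ {x ∈ Ω | δ x < δ₀}, xs x ∈ frontier Ω ∧ dist x (xs x) = δ x)
    -- the boundary density property
    (ε₀ : ℝ) (hε₀ : 0 < ε₀)
    (hbdry : ∀ x ∈ {x ∈ Ω | δ x < δ₀},
      ε₀ * δ x ^ ((N:ℝ) - 1) ≤ (ν (frontier Ω ∩ Metric.ball (xs x) (δ x / 2))).toReal)
    (z : EuclideanSpace ℝ (Fin N) → ℝ)
    (hz : z = fun x => ∫ y in frontier Ω, K x y ∂ν) :
    ∃ c₀ > 0, ∀ x ∈ {x ∈ Ω | δ x < δ₀}, c₀ * δ x ^ βm ≤ z x := by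
  have hc0 : (0:ℝ) < c := lt_trans one_pos hc
  have hsq : Real.sqrt (1/4 - μ) < 1/2 := by
    have h1 : (1:ℝ)/4 - μ < 1/4 := by linarith
    have := Real.sqrt_lt_sqrt (by linarith) h1
    calc Real.sqrt (1/4 - μ) < Real.sqrt (1/4) := this
      _ = 1/2 := by
        rw [show (1:ℝ)/4 = (1/2)^2 by norm_num, Real.sqrt_sq (by norm_num)]
  have hβsum : βp + βm = 1 := by rw [hβm, hβp]; ring
  have hβmpos : 0 < βm := by rw [hβm]; linarith
  have hexp : 2*βm - (N:ℝ) ≤ 0 := by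
    have h1 : (1:ℝ) ≤ (N:ℝ) := by exact_mod_cast hN
    have h2 : 0 ≤ Real.sqrt (1/4 - μ) := Real.sqrt_nonneg _
    rw [hβm]; linarith
  refine ⟨c⁻¹ * (3/2 : ℝ) ^ (2*βm - (N:ℝ)) * ε₀, by positivity, ?_⟩
  intro x hx
  obtain ⟨hxΩ, hxδ⟩ := hx
  have hxsmem := hxs x ⟨hxΩ, hxδ⟩
  have hd : 0 < δ x := by
    have hne : x ≠ xs x := by
      intro h
      have h2 := hxsmem.1
      rw [← h, hΩ.frontier_eq] at h2
      exact h2.2 hxΩ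
    calc (0:ℝ) < dist x (xs x) := dist_pos.2 hne
      _ = δ x := hxsmem.2
  set S := frontier Ω ∩ Metric.ball (xs x) (δ x / 2) with hS
  have hmeasS : MeasurableSet S :=
    isClosed_frontier.measurableSet.inter measurableSet_ball
  have hνS : ν S ≠ ⊤ := (measure_lt_top ν S).ne
  have hKx := hKint x hxΩ
  have hKxS : IntegrableOn (K x) S ν := hKx.mono_set Set.inter_subset_left
  -- pointwise lower bound on S
  have hpt : ∀ y ∈ S, c⁻¹ * δ x ^ βp * (3/2 * δ x) ^ (2*βm - (N:ℝ)) ≤ K x y := by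
    intro y hy
    have hyf : y ∈ frontier Ω := hy.1
    have hxy : ‖x - y‖ ≤ 3/2 * δ x := by
      have h1 : dist x y ≤ dist x (xs x) + dist (xs x) y := dist_triangle _ _ _
      have h2 : dist (xs x) y < δ x / 2 := by
        have := hy.2
        rwa [Metric.mem_ball, dist_comm] at this
      have h3 : dist x y ≤ δ x + δ x / 2 := by rw [hxsmem.2] at h1; linarith
      calc ‖x - y‖ = dist x y := (dist_eq_norm x y).symm
        _ ≤ 3/2 * δ x := by linarith
    have hxy0 : 0 < ‖x - y‖ := by
      rw [norm_pos_iff, sub_ne_zero]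
      intro h
      rw [h] at hxΩ
      rw [hΩ.frontier_eq] at hyf
      exact hyf.2 hxΩ
    have hrp : (3/2 * δ x) ^ (2*βm - (N:ℝ)) ≤ ‖x - y‖ ^ (2*βm - (N:ℝ)) :=
      Real.rpow_le_rpow_of_nonpos hxy0 hxy hexp
    have hlb := (hK x hxΩ y hyf).1
    have : c⁻¹ * δ x ^ βp * (3/2 * δ x) ^ (2*βm - (N:ℝ))
        ≤ c⁻¹ * δ x ^ βp * ‖x - y‖ ^ (2*βm - (N:ℝ)) := by
      apply mul_le_mul_of_nonneg_left hrp
      positivity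
    linarith
  have hint1 : c⁻¹ * δ x ^ βp * (3/2 * δ x) ^ (2*βm - (N:ℝ)) * (ν S).toReal
      ≤ ∫ y in S, K x y ∂ν :=
    setIntegral_ge_of_const_le_real hmeasS hνS hpt hKxS
  have hint2 : ∫ y in S, K x y ∂ν ≤ ∫ y in frontier Ω, K x y ∂ν := by
    apply setIntegral_mono_set hKx
    · filter_upwards [ae_restrict_mem isClosed_frontier.measurableSet] with y hy
      exact hKnn x hxΩ y hy
    · exact Filter.Eventually.of_forall fun y hy => hy.1
  have hbd := hbdry x ⟨hxΩ, hxδ⟩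
  -- combine
  have hconst : c⁻¹ * (3/2 : ℝ) ^ (2*βm - (N:ℝ)) * ε₀ * δ x ^ βm
      ≤ c⁻¹ * δ x ^ βp * (3/2 * δ x) ^ (2*βm - (N:ℝ)) * (ν S).toReal := by
    have hmul : (3/2 * δ x) ^ (2*βm - (N:ℝ))
        = (3/2:ℝ) ^ (2*βm - (N:ℝ)) * δ x ^ (2*βm - (N:ℝ)) :=
      Real.mul_rpow (by norm_num) hd.le
    have hpow : δ x ^ βp * δ x ^ (2*βm - (N:ℝ)) * δ x ^ ((N:ℝ) - 1) = δ x ^ βm := by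
      rw [← Real.rpow_add hd, ← Real.rpow_add hd]
      congr 1
      linarith
    have h1 : c⁻¹ * δ x ^ βp * (3/2 * δ x) ^ (2*βm - (N:ℝ)) * (ε₀ * δ x ^ ((N:ℝ)-1))
        ≤ c⁻¹ * δ x ^ βp * (3/2 * δ x) ^ (2*βm - (N:ℝ)) * (ν S).toReal := by
      apply mul_le_mul_of_nonneg_left hbd
      positivity
    calc c⁻¹ * (3/2 : ℝ) ^ (2*βm - (N:ℝ)) * ε₀ * δ x ^ βm
        = c⁻¹ * δ x ^ βp * (3/2 * δ x) ^ (2*βm - (N:ℝ)) * (ε₀ * δ x ^ ((N:ℝ)-1)) := by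
          rw [hmul, ← hpow]; ring
      _ ≤ _ := h1
  rw [hz]
  calc c⁻¹ * (3/2 : ℝ) ^ (2*βm - (N:ℝ)) * ε₀ * δ x ^ βm
      ≤ c⁻¹ * δ x ^ βp * (3/2 * δ x) ^ (2*βm - (N:ℝ)) * (ν S).toReal := hconst
    _ ≤ ∫ y in S, K x y ∂ν := hint1
    _ ≤ ∫ y in frontier Ω, K x y ∂ν := hint2
end
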